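/- Let (Sₙ)ₙ≥1 be an increasing sequence of 2-nets in X × Y such that the WEP holds for each Sₙ. Then the WEP holds for S = ⋃ₙ Sₙ. -/

import Mathlib

open Set

/-- Projection of `S` onto the first coordinate. -/
def SX (S : Set (ℝ × ℝ)) : Set ℝ := Prod.fst '' S

/-- Projection of `S` onto the second coordinate. -/
def SY (S : Set (ℝ × ℝ)) : Set ℝ := Prod.snd '' S

/-- The fiber `Y(x) = {y : (x,y) ∈ S}`. -/
def Yfib (S : Set (ℝ × ℝ)) (x : ℝ) : Set ℝ := {y | (x, y) ∈ S}

/-- The fiber `X(y) = {x : (x,y) ∈ S}`. -/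
def Xfib (S : Set (ℝ × ℝ)) (y : ℝ) : Set ℝ := {x | (x, y) ∈ S}

/-- The weak exact predictable representation property (WEP) for `S`:
every function decomposes as `f(x,y) = φ(x) + h(x)(y-x) - ψ(y)` on `S`. -/
def WEP (S : Set (ℝ × ℝ)) : Prop :=
  ∀ f : ℝ × ℝ → ℝ, ∃ φ h ψ : ℝ → ℝ,
    ∀ p ∈ S, f p = φ p.1 + h p.1 * (p.2 - p.1) - ψ p.2

/-- A set has at most two elements. -/
def AtMostTwo (A : Set ℝ) : Prop := ∀ a ∈ A, ∀ b ∈ A, ∀ c ∈ A, a = b ∨ a = c ∨ b = c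

/-- `S` is 1-erased: every point of `S_X` has at least two image points. -/
def OneErased (S : Set (ℝ × ℝ)) : Prop :=
  ∀ x ∈ SX S, ∃ y₁ y₂ : ℝ, y₁ ≠ y₂ ∧ (x, y₁) ∈ S ∧ (x, y₂) ∈ S

/-- `ψ` is `S`-affine: affine on every fiber `Y(x)`. -/
def SAffine (S : Set (ℝ × ℝ)) (ψ : ℝ → ℝ) : Prop :=
  ∀ x ∈ SX S, ∃ a b : ℝ, ∀ y ∈ Yfib S x, ψ y = a + b * (y - x)

/-- `A` is a 2-net: it is 1-erased and every `A`-affine function is globally affine. -/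
def TwoNet (A : Set (ℝ × ℝ)) : Prop :=
  OneErased A ∧ ∀ ψ : ℝ → ℝ, SAffine A ψ → ∃ α β : ℝ, ∀ y ∈ SY A, ψ y = α + β * y

/-- Two paths are neighbours if they share a coordinate. -/
def Neighbour (p q : ℝ × ℝ) : Prop := p.1 = q.1 ∨ p.2 = q.2

/-- Transitive (reflexive-transitive) closure of the neighbour relation within `S`. -/
def Linked (S : Set (ℝ × ℝ)) (p q : ℝ × ℝ) : Prop :=
  Relation.ReflTransGen (fun a b => a ∈ S ∧ b ∈ S ∧ Neighbour a b) p q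

/-- The 2-link property: some (injective) enumeration of `S_X` such that every new
point shares at most two image points with the union of previous images. -/
def TwoLinkProperty (S : Set (ℝ × ℝ)) : Prop :=
  ∃ (N : Set ℕ) (x : ℕ → ℝ), Set.InjOn x N ∧ x '' N = SX S ∧
    ∀ n ∈ N, AtMostTwo (Yfib S (x n) ∩ ⋃ i ∈ {i ∈ N | i < n}, Yfib S (x i))

/-- The erasure map removing paths `(x,y)` with `|X(y)| = 1`. -/
def E1x (T : Set (ℝ × ℝ)) : Set (ℝ × ℝ) := T \ {p | p ∈ T ∧ Xfib T p.2 = {p.1}}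

/-- The erasure map removing paths `(x,y)` with `|Y(x)| = 1`. -/
def E1y (T : Set (ℝ × ℝ)) : Set (ℝ × ℝ) := T \ {p | p ∈ T ∧ Yfib T p.1 = {p.2}}

/-- The erasure map removing paths `(x,y)` with `|Y(x)| = 2`. -/
def E2y (T : Set (ℝ × ℝ)) : Set (ℝ × ℝ) :=
  T \ {p | p ∈ T ∧ ∃ a b : ℝ, a ≠ b ∧ Yfib T p.1 = {a, b}}

/-- The composite erasure map `E = E_{2,y} ∘ E_{1,y} ∘ E_{1,x}`. -/
def Erase (T : Set (ℝ × ℝ)) : Set (ℝ × ℝ) := E2y (E1y (E1x T))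

/-- `S` is fully erasable: every path is eventually erased. -/
def FullyErasable (S : Set (ℝ × ℝ)) : Prop :=
  ∀ p ∈ S, ∃ n : ℕ, p ∉ Erase^[n] S

/-- `A` is saturated in `S`: every path of `S` with both endpoints in the
projections of `A` belongs to `A`. -/
def SaturatedIn (A S : Set (ℝ × ℝ)) : Prop :=
  ∀ p ∈ S, p.1 ∈ SX A → p.2 ∈ SY A → p ∈ A

/-- An `S`-maximal 2-net. -/
def MaximalTwoNet (S A : Set (ℝ × ℝ)) : Prop :=
  TwoNet A ∧ A ⊆ S ∧ ∀ A' : Set (ℝ × ℝ), TwoNet A' → A' ⊆ S → A ⊆ A' → A' = A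

/-- Auxiliary: recursive choice of a sequence satisfying a step relation. -/
lemma exists_seq_of_step {α : Type*} (P : ℕ → α → Prop) (R : ℕ → α → α → Prop)
    (h0 : ∃ a, P 0 a)
    (hstep : ∀ n a, P n a → ∃ b, P (n+1) b ∧ R n a b) :
    ∃ T : ℕ → α, (∀ n, P n (T n)) ∧ ∀ n, R n (T n) (T (n+1)) := by
  choose g hg hR using hstep
  let T : ∀ n : ℕ, {a // P n a} := fun n => Nat.rec ⟨h0.choose, h0.choose_spec⟩
    (fun n ih => ⟨g n ih.1 ih.2, hg n ih.1 ih.2⟩) n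
  exact ⟨fun n => (T n).1, fun n => (T n).2, fun n => hR n (T n).1 (T n).2⟩

/-- An increasing union of 2-nets satisfying the WEP satisfies the WEP. -/
theorem wep_increasing_union_of_twoNets
    (X Y : Set ℝ) (hX : X.Countable) (hY : Y.Countable)
    (hXpos : ∀ x ∈ X, 0 < x) (hYpos : ∀ y ∈ Y, 0 < y)
    (Sn : ℕ → Set (ℝ × ℝ)) (hSn : ∀ n, Sn n ⊆ X ×ˢ Y)
    (hmono : Monotone Sn)
    (hnet : ∀ n, TwoNet (Sn n))
    (hwep : ∀ n, WEP (Sn n)) :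
    WEP (⋃ n, Sn n) := by
  classical
  intro f
  set α := (ℝ → ℝ) × ((ℝ → ℝ) × (ℝ → ℝ)) with hα
  set P : ℕ → α → Prop :=
    fun n t => ∀ p ∈ Sn n, f p = t.1 p.1 + t.2.1 p.1 * (p.2 - p.1) - t.2.2 p.2 with hP
  set R : ℕ → α → α → Prop :=
    fun n a b => (∀ x ∈ SX (Sn n), b.1 x = a.1 x ∧ b.2.1 x = a.2.1 x) ∧
      (∀ y ∈ SY (Sn n), b.2.2 y = a.2.2 y) with hR
  have h0 : ∃ a : α, P 0 a := by
    obtain ⟨φ, h, ψ, hd⟩ := hwep 0 f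
    exact ⟨(φ, h, ψ), hd⟩
  have hstep : ∀ n a, P n a → ∃ b, P (n+1) b ∧ R n a b := by
    intro n a ha
    obtain ⟨φ, h, ψ, hd⟩ := hwep (n+1) f
    have haff : SAffine (Sn n) (fun y => a.2.2 y - ψ y) := by
      intro x hx
      refine ⟨a.1 x - φ x, a.2.1 x - h x, fun y hy => ?_⟩
      have h1 := ha (x, y) hy
      have h2 := hd (x, y) (hmono (Nat.le_succ n) hy)
      simp only at h1 h2 ⊢
      nlinarith [h1, h2]
    obtain ⟨A, B, hAB⟩ := (hnet n).2 _ haff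
    refine ⟨(fun x => φ x + A + B * x, fun x => h x + B, fun y => ψ y + A + B * y),
      ?_, ?_, ?_⟩
    · intro p hp
      have := hd p hp
      simp only
      nlinarith [this]
    · intro x hx
      obtain ⟨y₁, y₂, hne, hy₁, hy₂⟩ := (hnet n).1 x hx
      have hy₁' : y₁ ∈ SY (Sn n) := ⟨(x, y₁), hy₁, rfl⟩
      have hy₂' : y₂ ∈ SY (Sn n) := ⟨(x, y₂), hy₂, rfl⟩
      have e₁ : ψ y₁ + A + B * y₁ = a.2.2 y₁ := by have := hAB y₁ hy₁'; linarith
      have e₂ : ψ y₂ + A + B * y₂ = a.2.2 y₂ := by have := hAB y₂ hy₂'; linarith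
      have d₁ := ha (x, y₁) hy₁
      have d₂ := ha (x, y₂) hy₂
      have d₁' := hd (x, y₁) (hmono (Nat.le_succ n) hy₁)
      have d₂' := hd (x, y₂) (hmono (Nat.le_succ n) hy₂)
      simp only at d₁ d₂ d₁' d₂'
      have E₁ : φ x + A + B * x + (h x + B) * (y₁ - x) = a.1 x + a.2.1 x * (y₁ - x) := by
        nlinarith [d₁, d₁', e₁]
      have E₂ : φ x + A + B * x + (h x + B) * (y₂ - x) = a.1 x + a.2.1 x * (y₂ - x) := by
        nlinarith [d₂, d₂', e₂]
      have hsub : (h x + B - a.2.1 x) * (y₁ - y₂) = 0 := by nlinarith [E₁, E₂]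
      have hslope : h x + B = a.2.1 x := by
        rcases mul_eq_zero.mp hsub with hc | hc
        · linarith
        · exact absurd (by linarith) hne
      constructor
      · simp only
        rw [hslope] at E₁
        linarith
      · simpa using hslope
    · intro y hy
      have := hAB y hy
      simp only
      linarith
  obtain ⟨T, hT, hTR⟩ := exists_seq_of_step P R h0 hstep
  have hSXmono : ∀ {n m : ℕ}, n ≤ m → SX (Sn n) ⊆ SX (Sn m) :=
    fun hnm => Set.image_mono (hmono hnm)
  have hSYmono : ∀ {n m : ℕ}, n ≤ m → SY (Sn n) ⊆ SY (Sn m) :=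
    fun hnm => Set.image_mono (hmono hnm)
  have agreeφ : ∀ n m, n ≤ m → ∀ x ∈ SX (Sn n),
      (T m).1 x = (T n).1 x ∧ (T m).2.1 x = (T n).2.1 x := by
    intro n m hnm
    induction m, hnm using Nat.le_induction with
    | base => exact fun x _ => ⟨rfl, rfl⟩
    | succ m hnm ih =>
      intro x hx
      obtain ⟨e1, e2⟩ := (hTR m).1 x (hSXmono hnm hx)
      obtain ⟨e3, e4⟩ := ih x hx
      exact ⟨e1.trans e3, e2.trans e4⟩
  have agreeψ : ∀ n m, n ≤ m → ∀ y ∈ SY (Sn n), (T m).2.2 y = (T n).2.2 y := by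
    intro n m hnm
    induction m, hnm using Nat.le_induction with
    | base => exact fun y _ => rfl
    | succ m hnm ih =>
      intro y hy
      exact ((hTR m).2 y (hSYmono hnm hy)).trans (ih y hy)
  refine ⟨fun x => if hx : ∃ n, x ∈ SX (Sn n) then (T (Nat.find hx)).1 x else 0,
    fun x => if hx : ∃ n, x ∈ SX (Sn n) then (T (Nat.find hx)).2.1 x else 0,
    fun y => if hy : ∃ n, y ∈ SY (Sn n) then (T (Nat.find hy)).2.2 y else 0, ?_⟩
  intro p hp
  obtain ⟨m, hm⟩ := Set.mem_iUnion.mp hp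
  have hx : ∃ n, p.1 ∈ SX (Sn n) := ⟨m, ⟨p, hm, rfl⟩⟩
  have hy : ∃ n, p.2 ∈ SY (Sn n) := ⟨m, ⟨p, hm, rfl⟩⟩
  simp only [dif_pos hx, dif_pos hy]
  have hxle : Nat.find hx ≤ m := Nat.find_min' hx ⟨p, hm, rfl⟩
  have hyle : Nat.find hy ≤ m := Nat.find_min' hy ⟨p, hm, rfl⟩
  obtain ⟨e1, e2⟩ := agreeφ (Nat.find hx) m hxle p.1 (Nat.find_spec hx)
  have e3 := agreeψ (Nat.find hy) m hyle p.2 (Nat.find_spec hy)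
  rw [← e1, ← e2, ← e3]
  exact hT m p hm
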